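/- A coarse space (X, E) has asymptotic dimension zero if and only if for every entourage E ∈ 𝓔 there exists an entourage F ∈ 𝓔 such that for any E-chain x₀,…,xₙ in X (i.e., (x_{i−1}, x_i) ∈ E for all i) one has (x₀, xₙ) ∈ F. -/

import Mathlib

open Set

/-- An entourage: a symmetric reflexive subset of `X × X`. -/
def IsEntourage {X : Type*} (E : Set (X × X)) : Prop :=
  (∀ x : X, (x, x) ∈ E) ∧ (∀ p ∈ E, (p.2, p.1) ∈ E)

/-- A coarse structure: a family of entourages closed under composition and
under passing to smaller entourages. -/
structure CoarseStruct (X : Type*) where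
  sets : Set (Set (X × X))
  entourage : ∀ E ∈ sets, IsEntourage E
  comp : ∀ E ∈ sets, ∀ F ∈ sets,
    {p : X × X | ∃ y, (p.1, y) ∈ E ∧ (y, p.2) ∈ F} ∈ sets
  lower : ∀ E ∈ sets, ∀ F, IsEntourage F → F ⊆ E → F ∈ sets

/-- `(X, C)` has asymptotic dimension `≤ n`: for every entourage `E` there is a
uniformly bounded cover such that every `E`-ball meets at most `n + 1` members. -/
def AsdimLE {X : Type*} (C : CoarseStruct X) (n : ℕ) : Prop :=
  ∀ E ∈ C.sets, ∃ 𝓤 : Set (Set X),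
    ⋃₀ 𝓤 = univ ∧
    (∃ F ∈ C.sets, ∀ U ∈ 𝓤, ∀ x ∈ U, ∀ y ∈ U, (x, y) ∈ F) ∧
    ∀ x : X, {U ∈ 𝓤 | (U ∩ {y | (x, y) ∈ E}).Nonempty}.encard ≤ (n : ℕ∞) + 1

private lemma chain_of_rtg {X : Type*} {r : X → X → Prop} {x y : X}
    (h : Relation.ReflTransGen r x y) :
    ∃ (m : ℕ) (c : Fin (m + 1) → X), c 0 = x ∧ c (Fin.last m) = y ∧
      ∀ j : Fin m, r (c j.castSucc) (c j.succ) := by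
  induction h with
  | refl => exact ⟨0, fun _ => x, rfl, rfl, fun j => j.elim0⟩
  | @tail b c hab hbc ih =>
    obtain ⟨m, d, h0, hl, hc⟩ := ih
    refine ⟨m + 1, Fin.snoc d c, ?_, ?_, ?_⟩
    · rw [show (0 : Fin (m + 2)) = Fin.castSucc 0 from rfl, Fin.snoc_castSucc]
      exact h0
    · simp
    · intro j
      refine Fin.lastCases ?_ ?_ j
      · rw [Fin.succ_last, Fin.snoc_last, Fin.snoc_castSucc, hl]
        exact hbc
      · intro i
        rw [Fin.succ_castSucc, Fin.snoc_castSucc, Fin.snoc_castSucc]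
        exact hc i

theorem asdim_zero_iff_chains {X : Type*} (C : CoarseStruct X) :
    AsdimLE C 0 ↔
    ∀ E ∈ C.sets, ∃ F ∈ C.sets, ∀ (m : ℕ) (c : Fin (m + 1) → X),
      (∀ j : Fin m, (c (j.castSucc), c (j.succ)) ∈ E) →
      (c 0, c (Fin.last m)) ∈ F := by
  constructor
  · intro h E hE
    obtain ⟨𝓤, hcov, ⟨F, hF, hFb⟩, hmult⟩ := h E hE
    refine ⟨F, hF, ?_⟩
    intro m c hchain
    -- c 0 is in some member U
    have h0 : c 0 ∈ ⋃₀ 𝓤 := by rw [hcov]; trivial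
    obtain ⟨U, hU, hc0⟩ := h0
    -- key step: the chain stays in U
    have step : ∀ x ∈ U, ∀ y, (x, y) ∈ E → y ∈ U := by
      intro x hx y hxy
      have hy : y ∈ ⋃₀ 𝓤 := by rw [hcov]; trivial
      obtain ⟨V, hV, hyV⟩ := hy
      have hone : {W ∈ 𝓤 | (W ∩ {y | (x, y) ∈ E}).Nonempty}.encard ≤ 1 := by
        have := hmult x
        simpa using this
      have hUV : U = V := by
        apply Set.encard_le_one_iff.mp hone U V
        · exact ⟨hU, x, hx, (C.entourage E hE).1 x⟩
        · exact ⟨hV, y, hyV, hxy⟩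
      rw [hUV]; exact hyV
    have hall : ∀ j : Fin (m + 1), c j ∈ U := by
      intro j
      induction j using Fin.induction with
      | zero => exact hc0
      | succ i ih => exact step _ ih _ (hchain i)
    exact hFb U hU _ (hall 0) _ (hall (Fin.last m))
  · intro h E hE
    obtain ⟨F, hF, hFchain⟩ := h E hE
    set r : X → X → Prop := fun x y => (x, y) ∈ E with hr
    set R : X → X → Prop := Relation.ReflTransGen r with hR
    have hrsymm : Symmetric r := fun a b hab => (C.entourage E hE).2 (a, b) hab
    have hRsymm : Symmetric R := by
      haveI : Std.Symm r := ⟨fun a b h => hrsymm h⟩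
      exact fun a b h => Std.Symm.symm (r := Relation.ReflTransGen r) a b h
    have hclass : ∀ a b : X, R a b → {y | R a y} = {y | R b y} := by
      intro a b hab
      ext z
      exact ⟨fun hz => (hRsymm hab).trans hz, fun hz => hab.trans hz⟩
    refine ⟨Set.range (fun x => {y | R x y}), ?_, ⟨F, hF, ?_⟩, ?_⟩
    · ext x
      simp only [mem_sUnion, mem_range, mem_univ, iff_true]
      exact ⟨{y | R x y}, ⟨x, rfl⟩, Relation.ReflTransGen.refl⟩
    · rintro U ⟨a, rfl⟩ x hx y hy
      have hxy : R x y := (hRsymm hx).trans hy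
      obtain ⟨m, c, h0, hl, hc⟩ := chain_of_rtg hxy
      have := hFchain m c hc
      rwa [h0, hl] at this
    · intro x
      rw [show ((0 : ℕ) : ℕ∞) + 1 = 1 by simp]
      apply Set.encard_le_one_iff.mpr
      rintro U V ⟨⟨a, rfl⟩, y, hy, hxy⟩ ⟨⟨b, rfl⟩, z, hz, hxz⟩
      have h1 : {w | R a w} = {w | R x w} := by
        apply hclass
        exact Relation.ReflTransGen.trans hy (hRsymm (Relation.ReflTransGen.single hxy))
      have h2 : {w | R b w} = {w | R x w} := by
        apply hclass
        exact Relation.ReflTransGen.trans hz (hRsymm (Relation.ReflTransGen.single hxz))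
      show {w | R a w} = {w | R b w}
      rw [h1, h2]
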